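/- arXiv:2103.06204 — 5 statements merged into one kernel-verified Lean document; each statement's English description precedes it below -/
import Mathlib

section
/- Let the partition be λ-quasi-uniform and let κ : [0,1] → ℝ be measurable with 0 < m ≤ κ(x) ≤ M for all x ∈ [0,1]. Then the error estimator E_h of Babuška–Rheinboldt type satisfies the two-sided bound (λ m² / (6 (1+λ)³ M²)) · J(u_h)² ≤ E_h² ≤ (2 λ² M² / (3 (1+λ) m²)) · J(u_h)². -/
open MeasureTheory intervalIntegral

/-- Size `h_j = x_j − x_{j−1}` of the `j`-th element of the partition with nodes `x`. -/
def msize (x : ℕ → ℝ) (j : ℕ) : ℝ := x j - x (j - 1)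

/-- `h̄_i = min{h_i, h_{i+1}}`, the minimum of the two element sizes adjacent to node `i`. -/
def mbar (x : ℕ → ℝ) (i : ℕ) : ℝ := min (msize x i) (msize x (i + 1))

/-- Jump `[u_h']_{x_i} = s_i − s_{i+1}` of the derivative at the internal node `i`;
zero at the boundary nodes. -/
def mjump (N : ℕ) (s : ℕ → ℝ) (i : ℕ) : ℝ := if 1 ≤ i ∧ i < N then s i - s (i + 1) else 0

/-- Squared jump functional `J(u_h)² = Σ_{i=1}^{N−1} h̄_i [u_h']_{x_i}²`. -/
def Jsq (N : ℕ) (x s : ℕ → ℝ) : ℝ :=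
  ∑ i ∈ Finset.Icc 1 (N - 1), mbar x i * mjump N s i ^ 2

/-- `τ_{j,k} = (h_j/(h_{j−k+1} + h_{j−k})) [u_h']_{x_{j−k}} κ(x_{j−k})`, with the
convention that terms involving boundary jumps vanish. -/
noncomputable def tauBR (N : ℕ) (x : ℕ → ℝ) (κ : ℝ → ℝ) (s : ℕ → ℝ) (j k : ℕ) : ℝ :=
  msize x j / (msize x (j - k + 1) + msize x (j - k)) * mjump N s (j - k) * κ (x (j - k))

/- ### Auxiliary lemmas -/

/-- Exact value of the integral of the square of an affine function. -/
lemma int_affine (c d p q : ℝ) :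
    ∫ t in p..q, (c*t+d)^2
      = (q-p)*((c*p+d)^2+(c*p+d)*(c*q+d)+(c*q+d)^2)/3 := by
  have hderiv : ∀ t ∈ Set.uIcc p q,
      HasDerivAt (fun t : ℝ => c^2/3*t^3 + c*d*t^2 + d^2*t) ((c*t+d)^2) t := by
    intro t _
    have h1 := ((hasDerivAt_pow 3 t).const_mul (c^2/3))
    have h2 := ((hasDerivAt_pow 2 t).const_mul (c*d))
    have h3 := ((hasDerivAt_id t).const_mul (d^2))
    have := (h1.add h2).add h3
    refine this.congr_deriv ?_
    push_cast
    ring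
  rw [intervalIntegral.integral_eq_sub_of_hasDerivAt hderiv
    (Continuous.intervalIntegrable (by continuity) p q)]
  ring

/-- Two-sided comparison of `∫ (g/κ)²` with `∫ g²` for `m ≤ κ ≤ M`. -/
lemma int_bounds (g κ : ℝ → ℝ) (hg : Continuous g) (hκm : Measurable κ)
    (m M p q : ℝ) (hm : 0 < m) (hpq : p ≤ q) (hsub : Set.Icc p q ⊆ Set.Icc 0 1)
    (hb : ∀ t ∈ Set.Icc (0:ℝ) 1, m ≤ κ t ∧ κ t ≤ M) :
    (∫ t in p..q, (g t)^2) / M^2 ≤ (∫ t in p..q, (g t / κ t)^2) ∧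
    (∫ t in p..q, (g t / κ t)^2) ≤ (∫ t in p..q, (g t)^2) / m^2 := by
  have hMm : m ≤ M := le_trans (hb 0 (by norm_num)).1 (hb 0 (by norm_num)).2
  have hM : 0 < M := lt_of_lt_of_le hm hMm
  obtain ⟨C, hC⟩ := (isCompact_Icc (a := p) (b := q)).exists_bound_of_continuousOn
    hg.continuousOn
  have hmeas : Measurable fun t => (g t / κ t)^2 :=
    ((hg.measurable.div hκm).pow measurable_const)
  have hint : IntervalIntegrable (fun t => (g t / κ t)^2) volume p q := by
    apply MeasureTheory.IntegrableOn.intervalIntegrable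
    rw [Set.uIcc_of_le hpq]
    apply Measure.integrableOn_of_bounded (M := C^2/m^2) (by simp)
      hmeas.aestronglyMeasurable
    · refine (ae_restrict_iff' measurableSet_Icc).2 (ae_of_all _ fun t ht => ?_)
      have hk := hb t (hsub ht)
      have hgt := hC t ht
      have hκpos : 0 < κ t := lt_of_lt_of_le hm hk.1
      rw [Real.norm_eq_abs, abs_of_nonneg (by positivity), div_pow]
      apply div_le_div₀ (by positivity) _ (by positivity)
        (by nlinarith [hk.1])
      have : |g t| ≤ C := by simpa [Real.norm_eq_abs] using hgt
      nlinarith [abs_nonneg (g t), sq_abs (g t)]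
  have hint2 : IntervalIntegrable (fun t => (g t)^2) volume p q :=
    Continuous.intervalIntegrable (by continuity) p q
  constructor
  · rw [← intervalIntegral.integral_div]
    apply intervalIntegral.integral_mono_on hpq (hint2.div_const _) hint
    intro t ht
    have hk := hb t (hsub ht)
    have hκpos : 0 < κ t := lt_of_lt_of_le hm hk.1
    rw [div_pow]
    exact div_le_div_of_nonneg_left (by positivity) (by positivity) (by nlinarith [hk.2])
  · rw [← intervalIntegral.integral_div]
    apply intervalIntegral.integral_mono_on hpq hint (hint2.div_const _)
    intro t ht
    have hk := hb t (hsub ht)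
    have hκpos : 0 < κ t := lt_of_lt_of_le hm hk.1
    rw [div_pow]
    exact div_le_div_of_nonneg_left (by positivity) (by positivity) (by nlinarith [hk.1])

/-- Two-sided bound for `(a³+b³)/(a+b)²` in terms of `min a b` on a quasi-uniform pair. -/
lemma node_alg (a b lam : ℝ) (ha : 0 < a) (hb : 0 < b) (hlam : 1 < lam)
    (h1 : b ≤ lam * a) (h2 : a ≤ lam * b) :
    min a b / (1+lam) ≤ (a^3+b^3)/(a+b)^2 ∧
    (a^3+b^3)/(a+b)^2 ≤ lam^2 * min a b / (1+lam) := by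
  have hl0 : (0:ℝ) < 1 + lam := by linarith
  have hab : 0 < a + b := by linarith
  constructor
  · rw [div_le_div_iff₀ hl0 (by positivity)]
    rcases le_total a b with h | h
    · rw [min_eq_left h]
      nlinarith [mul_nonneg (mul_nonneg (sub_nonneg.2 h) hb.le) ha.le,
        mul_nonneg (mul_nonneg (sub_nonneg.2 h) hb.le) hb.le,
        mul_pos ha hb, mul_pos (mul_pos ha ha) hb]
    · rw [min_eq_right h]
      nlinarith [mul_nonneg (mul_nonneg (sub_nonneg.2 h) ha.le) hb.le,
        mul_nonneg (mul_nonneg (sub_nonneg.2 h) ha.le) ha.le,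
        mul_pos ha hb, mul_pos (mul_pos hb hb) ha]
  · rw [div_le_div_iff₀ (by positivity) hl0]
    rcases le_total a b with h | h
    · rw [min_eq_left h]
      nlinarith [mul_nonneg (mul_nonneg (sub_nonneg.2 h) (sub_nonneg.2 h1)) ha.le,
        mul_nonneg (mul_nonneg (sub_nonneg.2 h) (sub_nonneg.2 h1)) hb.le,
        mul_nonneg (mul_nonneg (sub_nonneg.2 h1) ha.le) hb.le,
        mul_nonneg (mul_nonneg (sub_nonneg.2 h1) ha.le) ha.le,
        mul_pos ha hb]
    · rw [min_eq_right h]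
      nlinarith [mul_nonneg (mul_nonneg (sub_nonneg.2 h) (sub_nonneg.2 h2)) hb.le,
        mul_nonneg (mul_nonneg (sub_nonneg.2 h) (sub_nonneg.2 h2)) ha.le,
        mul_nonneg (mul_nonneg (sub_nonneg.2 h2) hb.le) ha.le,
        mul_nonneg (mul_nonneg (sub_nonneg.2 h2) hb.le) hb.le,
        mul_pos ha hb]

/-- Regrouping of element contributions by internal nodes. -/
lemma regroup (N : ℕ) (hN : 1 ≤ N) (x : ℕ → ℝ) (κ : ℝ → ℝ) (s : ℕ → ℝ) :
    ∑ j ∈ Finset.Icc 1 N,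
      (msize x j * tauBR N x κ s j 1 ^ 2 + msize x j * tauBR N x κ s j 0 ^ 2)
    = ∑ i ∈ Finset.range (N-1),
        (msize x (i+2) * tauBR N x κ s (i+2) 1 ^ 2
          + msize x (i+1) * tauBR N x κ s (i+1) 0 ^ 2) := by
  rw [← Finset.Ico_add_one_right_eq_Icc, Finset.sum_Ico_eq_sum_range]
  have hr : N + 1 - 1 = N := by omega
  rw [hr]
  obtain ⟨n, rfl⟩ : ∃ n, N = n + 1 := ⟨N-1, by omega⟩
  have hr2 : n + 1 - 1 = n := by omega
  rw [hr2]
  rw [Finset.sum_add_distrib,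
    Finset.sum_range_succ' (fun j => msize x (1+j) * tauBR (n+1) x κ s (1+j) 1 ^ 2) n,
    Finset.sum_range_succ (fun j => msize x (1+j) * tauBR (n+1) x κ s (1+j) 0 ^ 2) n]
  have hb1 : msize x (1+0) * tauBR (n+1) x κ s (1+0) 1 ^ 2 = 0 := by
    simp [tauBR, mjump]
  have hb2 : msize x (1+n) * tauBR (n+1) x κ s (1+n) 0 ^ 2 = 0 := by
    have h0 : mjump (n+1) s (1+n) = 0 := by
      unfold mjump; rw [if_neg (by omega)]
    simp [tauBR, h0]
  rw [hb1, hb2, add_zero, add_zero, ← Finset.sum_add_distrib]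
  refine Finset.sum_congr rfl fun i _ => ?_
  have e1 : 1 + (i+1) = i + 2 := by omega
  have e2 : 1 + i = i + 1 := by omega
  rw [e1, e2]

set_option maxHeartbeats 1000000 in
/-- On a λ-quasi-uniform partition of `[0,1]`, for measurable `κ` with
`0 < m ≤ κ ≤ M` on `[0,1]`, the Babuška–Rheinboldt estimator
`E_h² = Σ_{j=1}^N ∫_{K_j} (ℓ_j/κ)²`, with `ℓ_j` affine, `ℓ_j(x_{j−1}) = τ_{j,1}` and
`ℓ_j(x_j) = −τ_{j,0}`, satisfies
`(λ m²/(6(1+λ)³M²)) J(u_h)² ≤ E_h² ≤ (2λ²M²/(3(1+λ)m²)) J(u_h)²`. -/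
theorem stmt0 (N : ℕ) (hN : 1 ≤ N) (x : ℕ → ℝ) (hx0 : x 0 = 0) (hxN : x N = 1)
    (hmono : ∀ i < N, x i < x (i + 1)) (lam : ℝ) (hlam : 1 < lam)
    (hquasi : ∀ j, 2 ≤ j → j ≤ N →
      1 / lam ≤ msize x j / msize x (j - 1) ∧ msize x j / msize x (j - 1) ≤ lam)
    (κ : ℝ → ℝ) (hκmeas : Measurable κ) (m M : ℝ) (hm : 0 < m)
    (hκ : ∀ t ∈ Set.Icc (0 : ℝ) 1, m ≤ κ t ∧ κ t ≤ M)
    (u : ℝ → ℝ) (s : ℕ → ℝ) (hucont : ContinuousOn u (Set.Icc 0 1))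
    (haff : ∀ j, 1 ≤ j → j ≤ N → ∀ t ∈ Set.Icc (x (j - 1)) (x j),
      u t = u (x (j - 1)) + s j * (t - x (j - 1)))
    (ℓ : ℕ → ℝ → ℝ) (hℓaff : ∀ j, ∃ c d : ℝ, ∀ t : ℝ, ℓ j t = c * t + d)
    (hℓval : ∀ j, 1 ≤ j → j ≤ N →
      ℓ j (x (j - 1)) = tauBR N x κ s j 1 ∧ ℓ j (x j) = -tauBR N x κ s j 0) :
    lam * m ^ 2 / (6 * (1 + lam) ^ 3 * M ^ 2) * Jsq N x s ≤
      (∑ j ∈ Finset.Icc 1 N, ∫ t in (x (j - 1))..(x j), (ℓ j t / κ t) ^ 2) ∧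
    (∑ j ∈ Finset.Icc 1 N, ∫ t in (x (j - 1))..(x j), (ℓ j t / κ t) ^ 2) ≤
      2 * lam ^ 2 * M ^ 2 / (3 * (1 + lam) * m ^ 2) * Jsq N x s := by
  have hlam0 : (0:ℝ) < 1 + lam := by linarith
  have hM : 0 < M :=
    lt_of_lt_of_le hm (le_trans (hκ 0 (by norm_num)).1 (hκ 0 (by norm_num)).2)
  -- monotonicity of the nodes
  have hle : ∀ j, j ≤ N → ∀ i, i ≤ j → x i ≤ x j := by
    intro j hj
    induction j with
    | zero => intro i hi; rw [Nat.le_zero.mp hi]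
    | succ n ih =>
      intro i hi
      rcases Nat.eq_or_lt_of_le hi with h | h
      · rw [h]
      · exact le_trans (ih (by omega) i (by omega)) (le_of_lt (hmono n (by omega)))
  have hx01 : ∀ i, i ≤ N → x i ∈ Set.Icc (0:ℝ) 1 := by
    intro i hi
    constructor
    · rw [← hx0]; exact hle i hi 0 (Nat.zero_le _)
    · rw [← hxN]; exact hle N le_rfl i hi
  have hpos : ∀ j, 1 ≤ j → j ≤ N → 0 < msize x j := by
    intro j h1 h2
    have h3 : j - 1 + 1 = j := by omega
    have := hmono (j-1) (by omega)
    rw [h3] at this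
    exact sub_pos.2 this
  -- per-element bounds for the estimator integrals
  have hel : ∀ j ∈ Finset.Icc 1 N,
      (msize x j * tauBR N x κ s j 1 ^ 2 + msize x j * tauBR N x κ s j 0 ^ 2) / (6*M^2)
        ≤ (∫ t in (x (j-1))..(x j), (ℓ j t / κ t)^2) ∧
      (∫ t in (x (j-1))..(x j), (ℓ j t / κ t)^2)
        ≤ (msize x j * tauBR N x κ s j 1 ^ 2 + msize x j * tauBR N x κ s j 0 ^ 2) / (2*m^2) := by
    intro j hj
    rw [Finset.mem_Icc] at hj
    obtain ⟨c, d, hcd⟩ := hℓaff j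
    obtain ⟨hv1, hv2⟩ := hℓval j hj.1 hj.2
    have hpq : x (j-1) ≤ x j := hle j hj.2 (j-1) (by omega)
    have hsub : Set.Icc (x (j-1)) (x j) ⊆ Set.Icc (0:ℝ) 1 := by
      intro t ht
      exact ⟨le_trans (hx01 (j-1) (by omega)).1 ht.1, le_trans ht.2 (hx01 j hj.2).2⟩
    have hib := int_bounds (fun t => c*t+d) κ (by continuity) hκmeas m M _ _ hm hpq hsub hκ
    have hval1 : c * x (j-1) + d = tauBR N x κ s j 1 := by rw [← hcd]; exact hv1
    have hval2 : c * x j + d = -tauBR N x κ s j 0 := by rw [← hcd]; exact hv2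
    have hIeq : (∫ t in (x (j-1))..(x j), (ℓ j t / κ t)^2)
        = ∫ t in (x (j-1))..(x j), ((c*t+d) / κ t)^2 := by
      simp_rw [hcd]
    have hms := hpos j hj.1 hj.2
    have hia : (∫ t in (x (j-1))..(x j), (c*t+d)^2)
        = msize x j * (tauBR N x κ s j 1 ^ 2
            - tauBR N x κ s j 1 * tauBR N x κ s j 0 + tauBR N x κ s j 0 ^ 2) / 3 := by
      rw [int_affine, hval1, hval2]
      unfold msize
      ring
    have hsq := mul_nonneg hms.le (sq_nonneg (tauBR N x κ s j 1 - tauBR N x κ s j 0))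
    have hsq2 := mul_nonneg hms.le (sq_nonneg (tauBR N x κ s j 1 + tauBR N x κ s j 0))
    constructor
    · rw [hIeq]
      refine le_trans ?_ hib.1
      rw [hia]
      rw [div_le_div_iff₀ (by positivity) (by positivity)]
      nlinarith [sq_nonneg M]
    · rw [hIeq]
      refine le_trans hib.2 ?_
      rw [hia]
      rw [div_le_div_iff₀ (by positivity) (by positivity)]
      nlinarith [sq_nonneg m]
  -- sum the element bounds
  have hlowE : (∑ j ∈ Finset.Icc 1 N,
        (msize x j * tauBR N x κ s j 1 ^ 2 + msize x j * tauBR N x κ s j 0 ^ 2)) / (6*M^2)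
      ≤ ∑ j ∈ Finset.Icc 1 N, ∫ t in (x (j - 1))..(x j), (ℓ j t / κ t) ^ 2 := by
    rw [Finset.sum_div]
    exact Finset.sum_le_sum fun j hj => (hel j hj).1
  have hhighE : (∑ j ∈ Finset.Icc 1 N, ∫ t in (x (j - 1))..(x j), (ℓ j t / κ t) ^ 2)
      ≤ (∑ j ∈ Finset.Icc 1 N,
        (msize x j * tauBR N x κ s j 1 ^ 2 + msize x j * tauBR N x κ s j 0 ^ 2)) / (2*m^2) := by
    rw [Finset.sum_div]
    exact Finset.sum_le_sum fun j hj => (hel j hj).2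
  rw [regroup N hN x κ s] at hlowE hhighE
  -- per-node bounds
  have hnode : ∀ i ∈ Finset.range (N-1),
      m^2/(1+lam) * (mbar x (i+1) * mjump N s (i+1)^2)
        ≤ (msize x (i+2) * tauBR N x κ s (i+2) 1 ^ 2
            + msize x (i+1) * tauBR N x κ s (i+1) 0 ^ 2) ∧
      (msize x (i+2) * tauBR N x κ s (i+2) 1 ^ 2
            + msize x (i+1) * tauBR N x κ s (i+1) 0 ^ 2)
        ≤ lam^2*M^2/(1+lam) * (mbar x (i+1) * mjump N s (i+1)^2) := by
    intro i hi
    rw [Finset.mem_range] at hi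
    have hiN : i + 2 ≤ N := by omega
    have ha : 0 < msize x (i+1) := hpos (i+1) (by omega) (by omega)
    have hb : 0 < msize x (i+2) := hpos (i+2) (by omega) hiN
    have e21 : i + 2 - 1 = i + 1 := by omega
    have e11 : i + 1 + 1 = i + 2 := by omega
    have hq := hquasi (i+2) (by omega) hiN
    rw [e21] at hq
    have hba : msize x (i+2) ≤ lam * msize x (i+1) := by
      rw [div_le_iff₀ ha] at hq
      linarith [hq.2]
    have hab : msize x (i+1) ≤ lam * msize x (i+2) := by
      have := hq.1
      rw [div_le_div_iff₀ (by linarith) ha] at this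
      linarith
    have hna := node_alg (msize x (i+1)) (msize x (i+2)) lam ha hb hlam hba hab
    have hk := hκ (x (i+1)) (hx01 (i+1) (by omega))
    have hKpos : 0 < κ (x (i+1)) := lt_of_lt_of_le hm hk.1
    have hm2 : m^2 ≤ κ (x (i+1))^2 := pow_le_pow_left₀ hm.le hk.1 2
    have hM2 : κ (x (i+1))^2 ≤ M^2 := pow_le_pow_left₀ hKpos.le hk.2 2
    simp only [mbar, tauBR, e21, Nat.sub_zero, e11]
    set a := msize x (i+1) with ha'
    set b := msize x (i+2) with hb'
    set J := mjump N s (i+1) with hJ'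
    set K := κ (x (i+1)) with hK'
    have hab0 : b + a ≠ 0 := by positivity
    have hab0' : a + b ≠ 0 := by positivity
    have hRHS : b * (b/(b+a)*J*K)^2 + a * (a/(b+a)*J*K)^2
        = J^2*K^2*((a^3+b^3)/(a+b)^2) := by
      field_simp
      ring
    have hmin0 : 0 ≤ min a b := le_min ha.le hb.le
    have hratio0 : 0 ≤ (a^3+b^3)/(a+b)^2 :=
      div_nonneg (by positivity) (sq_nonneg _)
    constructor
    · calc m^2/(1+lam) * (min a b * J^2)
          = J^2 * (m^2 * (min a b / (1+lam))) := by ring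
        _ ≤ J^2 * (K^2 * ((a^3+b^3)/(a+b)^2)) := by
            apply mul_le_mul_of_nonneg_left _ (sq_nonneg J)
            exact mul_le_mul hm2 hna.1 (by positivity) (sq_nonneg K)
        _ = b * (b/(b+a)*J*K)^2 + a * (a/(b+a)*J*K)^2 := by
            rw [← mul_assoc]; exact hRHS.symm
    · calc b * (b/(b+a)*J*K)^2 + a * (a/(b+a)*J*K)^2
          = J^2 * (K^2 * ((a^3+b^3)/(a+b)^2)) := by rw [← mul_assoc]; exact hRHS
        _ ≤ J^2 * (M^2 * (lam^2 * min a b / (1+lam))) := by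
            apply mul_le_mul_of_nonneg_left _ (sq_nonneg J)
            exact mul_le_mul hM2 hna.2 hratio0 (sq_nonneg M)
        _ = lam^2*M^2/(1+lam) * (min a b * J^2) := by ring
  -- Jsq as a range sum
  have hJ : Jsq N x s = ∑ i ∈ Finset.range (N-1), mbar x (i+1) * mjump N s (i+1)^2 := by
    rw [Jsq, ← Finset.Ico_add_one_right_eq_Icc, Finset.sum_Ico_eq_sum_range]
    have hr : N - 1 + 1 - 1 = N - 1 := by omega
    rw [hr]
    exact Finset.sum_congr rfl fun i _ => by rw [Nat.add_comm 1 i]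
  have hJsq0 : 0 ≤ Jsq N x s := by
    rw [hJ]
    apply Finset.sum_nonneg
    intro i hi
    rw [Finset.mem_range] at hi
    have ha : 0 < msize x (i+1) := hpos (i+1) (by omega) (by omega)
    have hb : 0 < msize x (i+2) := hpos (i+2) (by omega) (by omega)
    have : 0 ≤ mbar x (i+1) := by
      rw [mbar]
      exact le_min ha.le (by rw [show i+1+1 = i+2 by omega]; exact hb.le)
    positivity
  -- sum the node bounds
  have hTlow : m^2/(1+lam) * Jsq N x s
      ≤ ∑ i ∈ Finset.range (N-1),
          (msize x (i+2) * tauBR N x κ s (i+2) 1 ^ 2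
            + msize x (i+1) * tauBR N x κ s (i+1) 0 ^ 2) := by
    rw [hJ, Finset.mul_sum]
    exact Finset.sum_le_sum fun i hi => (hnode i hi).1
  have hThigh : (∑ i ∈ Finset.range (N-1),
          (msize x (i+2) * tauBR N x κ s (i+2) 1 ^ 2
            + msize x (i+1) * tauBR N x κ s (i+1) 0 ^ 2))
      ≤ lam^2*M^2/(1+lam) * Jsq N x s := by
    rw [hJ, Finset.mul_sum]
    exact Finset.sum_le_sum fun i hi => (hnode i hi).2
  have hlampos : (0:ℝ) < lam := lt_trans one_pos hlam
  constructor
  · refine le_trans ?_ hlowE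
    have h1 : (m^2/(1+lam) * Jsq N x s) / (6*M^2)
        ≤ (∑ i ∈ Finset.range (N-1),
            (msize x (i+2) * tauBR N x κ s (i+2) 1 ^ 2
              + msize x (i+1) * tauBR N x κ s (i+1) 0 ^ 2)) / (6*M^2) := by
      gcongr
    refine le_trans ?_ h1
    have hc1 : lam/(1+lam)^3 ≤ 1/(1+lam) := by
      rw [div_le_div_iff₀ (by positivity) hlam0]
      nlinarith [sq_nonneg lam]
    have hcoeff : lam * m^2/(6*(1+lam)^3*M^2) ≤ m^2/(6*(1+lam)*M^2) := by
      have h := mul_le_mul_of_nonneg_left hc1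
        (le_of_lt (by positivity : (0:ℝ) < m^2/(6*M^2)))
      calc lam*m^2/(6*(1+lam)^3*M^2)
          = m^2/(6*M^2) * (lam/(1+lam)^3) := by
            field_simp
        _ ≤ m^2/(6*M^2) * (1/(1+lam)) := h
        _ = m^2/(6*(1+lam)*M^2) := by
            field_simp
    calc lam * m ^ 2 / (6 * (1 + lam) ^ 3 * M ^ 2) * Jsq N x s
        ≤ m^2/(6*(1+lam)*M^2) * Jsq N x s := mul_le_mul_of_nonneg_right hcoeff hJsq0
      _ = (m^2/(1+lam) * Jsq N x s) / (6*M^2) := by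
            field_simp
            try ring
            try exact Or.inl trivial
  · refine le_trans hhighE ?_
    have h1 : (∑ i ∈ Finset.range (N-1),
            (msize x (i+2) * tauBR N x κ s (i+2) 1 ^ 2
              + msize x (i+1) * tauBR N x κ s (i+1) 0 ^ 2)) / (2*m^2)
        ≤ (lam^2*M^2/(1+lam) * Jsq N x s) / (2*m^2) := by
      gcongr
    refine le_trans h1 ?_
    have hcoeff : lam^2*M^2/(2*(1+lam)*m^2) ≤ 2*lam^2*M^2/(3*(1+lam)*m^2) := by
      rw [div_le_div_iff₀ (by positivity) (by positivity)]
      nlinarith [mul_pos (mul_pos (mul_pos (pow_pos hlampos 2) (pow_pos hM 2)) hlam0)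
        (pow_pos hm 2)]
    calc (lam^2*M^2/(1+lam) * Jsq N x s) / (2*m^2)
        = lam^2*M^2/(2*(1+lam)*m^2) * Jsq N x s := by
            field_simp
            try ring
            try exact Or.inl trivial
      _ ≤ 2 * lam ^ 2 * M ^ 2 / (3 * (1 + lam) * m ^ 2) * Jsq N x s :=
          mul_le_mul_of_nonneg_right hcoeff hJsq0
end

section
/- Let a < b be real numbers, let ℓ : ℝ → ℝ be an affine function with ℓ(a) = τ_1 and ℓ(b) = −τ_0, and let κ : [a,b] → ℝ be measurable with 0 < m ≤ κ(x) ≤ M for all x ∈ [a,b]. Then ((b−a)/(6 M²)) (τ_0² + τ_1²) ≤ ∫_a^b (ℓ(x)/κ(x))² dx ≤ (2(b−a)/(3 m²)) (τ_0² + τ_1²). -/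
open MeasureTheory intervalIntegral

private theorem div_le_div_of_nonneg_right' {x y z : ℝ} (h : x ≤ y) (hz : 0 < z) :
    x / z ≤ y / z := by
  gcongr

/-- For an affine function `ℓ` with `ℓ a = τ₁`, `ℓ b = −τ₀`, and a
measurable `κ` with `0 < m ≤ κ ≤ M` on `[a,b]`, the integral `∫_a^b (ℓ/κ)²` is bounded
below by `((b−a)/(6M²))(τ₀² + τ₁²)` and above by `(2(b−a)/(3m²))(τ₀² + τ₁²)`. -/
theorem stmt4 (a b c d m M τ0 τ1 : ℝ) (hab : a < b) (ℓ κ : ℝ → ℝ)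
    (hℓ : ∀ x : ℝ, ℓ x = c * x + d) (hℓa : ℓ a = τ1) (hℓb : ℓ b = -τ0)
    (hκmeas : Measurable κ) (hm : 0 < m)
    (hκ : ∀ x ∈ Set.Icc a b, m ≤ κ x ∧ κ x ≤ M) :
    (b - a) / (6 * M ^ 2) * (τ0 ^ 2 + τ1 ^ 2) ≤ (∫ x in a..b, (ℓ x / κ x) ^ 2) ∧
    (∫ x in a..b, (ℓ x / κ x) ^ 2) ≤ 2 * (b - a) / (3 * m ^ 2) * (τ0 ^ 2 + τ1 ^ 2) := by
  have hab' : a ≤ b := hab.le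
  have haI : a ∈ Set.Icc a b := ⟨le_refl a, hab'⟩
  have hmM : m ≤ M := (hκ a haI).1.trans (hκ a haI).2
  have hM : 0 < M := lt_of_lt_of_le hm hmM
  -- pointwise bounds on [a,b]
  have hptU : ∀ x ∈ Set.Icc a b, (ℓ x / κ x) ^ 2 ≤ (ℓ x) ^ 2 / m ^ 2 := by
    intro x hx
    obtain ⟨h1, h2⟩ := hκ x hx
    have hκ0 : 0 < κ x := lt_of_lt_of_le hm h1
    rw [div_pow]
    apply div_le_div_of_nonneg_left (by positivity) (by positivity)
    nlinarith
  have hptL : ∀ x ∈ Set.Icc a b, (ℓ x) ^ 2 / M ^ 2 ≤ (ℓ x / κ x) ^ 2 := by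
    intro x hx
    obtain ⟨h1, h2⟩ := hκ x hx
    have hκ0 : 0 < κ x := lt_of_lt_of_le hm h1
    rw [div_pow]
    apply div_le_div_of_nonneg_left (by positivity) (by positivity)
    nlinarith
  -- continuity / integrability of ℓ²
  have hℓcont : Continuous ℓ := by
    have : ℓ = fun x => c * x + d := funext hℓ
    rw [this]; continuity
  have hℓ2int : IntervalIntegrable (fun x => (ℓ x) ^ 2) volume a b :=
    ((hℓcont.pow 2)).intervalIntegrable a b
  have hℓ2intm : IntervalIntegrable (fun x => (ℓ x) ^ 2 / m ^ 2) volume a b :=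
    (((hℓcont.pow 2)).div_const _).intervalIntegrable a b
  have hℓ2intM : IntervalIntegrable (fun x => (ℓ x) ^ 2 / M ^ 2) volume a b :=
    (((hℓcont.pow 2)).div_const _).intervalIntegrable a b
  -- integrability of (ℓ/κ)²
  have hfmeas : AEStronglyMeasurable (fun x => (ℓ x / κ x) ^ 2)
      (volume.restrict (Set.uIcc a b)) :=
    ((hℓcont.measurable.div hκmeas).pow_const 2).aestronglyMeasurable
  have hfint : IntervalIntegrable (fun x => (ℓ x / κ x) ^ 2) volume a b := by
    rw [intervalIntegrable_iff_integrableOn_Icc_of_le hab']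
    apply Integrable.mono (g := fun x => (ℓ x) ^ 2 / m ^ 2)
    · exact (intervalIntegrable_iff_integrableOn_Icc_of_le hab').mp hℓ2intm
    · exact ((hℓcont.measurable.div hκmeas).pow_const 2).aestronglyMeasurable
    · filter_upwards [ae_restrict_mem measurableSet_Icc] with x hx
      have h1 := hptU x hx
      have h2 : (0:ℝ) ≤ (ℓ x / κ x) ^ 2 := sq_nonneg _
      simp only [Real.norm_eq_abs, abs_of_nonneg h2,
        abs_of_nonneg (le_trans h2 h1)]
      exact h1
  -- value of ∫ ℓ²
  have hI : (∫ x in a..b, (ℓ x) ^ 2)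
      = c ^ 2 * ((b ^ 3 - a ^ 3) / 3) + 2 * c * d * ((b ^ 2 - a ^ 2) / 2)
        + d ^ 2 * (b - a) := by
    have e : (fun x => (ℓ x) ^ 2)
        = fun x : ℝ => c ^ 2 * x ^ 2 + 2 * c * d * x + d ^ 2 := by
      funext x; rw [hℓ]; ring
    rw [e]
    have i1 : IntervalIntegrable (fun x : ℝ => c ^ 2 * x ^ 2) volume a b := by
      apply Continuous.intervalIntegrable; continuity
    have i2 : IntervalIntegrable (fun x : ℝ => 2 * c * d * x) volume a b := by
      apply Continuous.intervalIntegrable; continuity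
    have i3 : IntervalIntegrable (fun _ : ℝ => d ^ 2) volume a b := by
      apply Continuous.intervalIntegrable; continuity
    rw [integral_add (i1.add i2) i3, integral_add i1 i2, intervalIntegral.integral_const_mul,
      intervalIntegral.integral_const_mul, integral_id]
    have h2 : (∫ x in a..b, x ^ 2) = (b ^ 3 - a ^ 3) / 3 := by
      rw [integral_pow]; norm_num
    have h3 : (∫ _x in a..b, d ^ 2) = (b - a) * d ^ 2 := by simp [smul_eq_mul]
    rw [h2, h3]
    ring
  have hτ1 : τ1 = c * a + d := by rw [← hℓa, hℓ]
  have hτ0 : τ0 = -(c * b + d) := by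
    have := hℓb; rw [hℓ] at this; linarith
  -- bounds on ∫ ℓ²
  have hIlow : (b - a) / 6 * (τ0 ^ 2 + τ1 ^ 2) ≤ ∫ x in a..b, (ℓ x) ^ 2 := by
    rw [hI, hτ0, hτ1]
    have key : (c ^ 2 * ((b ^ 3 - a ^ 3) / 3) + 2 * c * d * ((b ^ 2 - a ^ 2) / 2)
        + d ^ 2 * (b - a)) - (b - a) / 6 * ((-(c * b + d)) ^ 2 + (c * a + d) ^ 2)
        = (b - a) * (c * (a + b) + 2 * d) ^ 2 / 6 := by ring
    have hnn := mul_nonneg (sub_nonneg.mpr hab') (sq_nonneg (c * (a + b) + 2 * d))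
    linarith
  have hIhigh : (∫ x in a..b, (ℓ x) ^ 2) ≤ 2 * (b - a) / 3 * (τ0 ^ 2 + τ1 ^ 2) := by
    rw [hI, hτ0, hτ1]
    have key : 2 * (b - a) / 3 * ((-(c * b + d)) ^ 2 + (c * a + d) ^ 2)
        - (c ^ 2 * ((b ^ 3 - a ^ 3) / 3) + 2 * c * d * ((b ^ 2 - a ^ 2) / 2)
          + d ^ 2 * (b - a))
        = (b - a) * ((c * (a - b)) ^ 2 + (c * a + d) ^ 2 + (c * b + d) ^ 2) / 6 := by ring
    have h1 := mul_nonneg (sub_nonneg.mpr hab') (sq_nonneg (c * (a - b)))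
    have h2 := mul_nonneg (sub_nonneg.mpr hab') (sq_nonneg (c * a + d))
    have h3 := mul_nonneg (sub_nonneg.mpr hab') (sq_nonneg (c * b + d))
    linarith
  constructor
  · calc (b - a) / (6 * M ^ 2) * (τ0 ^ 2 + τ1 ^ 2)
        ≤ (∫ x in a..b, (ℓ x) ^ 2 / M ^ 2) := by
          rw [intervalIntegral.integral_div]
          have : (b - a) / (6 * M ^ 2) * (τ0 ^ 2 + τ1 ^ 2)
              = ((b - a) / 6 * (τ0 ^ 2 + τ1 ^ 2)) / M ^ 2 := by ring
          rw [this]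
          exact div_le_div_of_nonneg_right' hIlow (by positivity)
      _ ≤ ∫ x in a..b, (ℓ x / κ x) ^ 2 :=
          integral_mono_on hab' hℓ2intM hfint hptL
  · calc (∫ x in a..b, (ℓ x / κ x) ^ 2)
        ≤ (∫ x in a..b, (ℓ x) ^ 2 / m ^ 2) :=
          integral_mono_on hab' hfint hℓ2intm hptU
      _ ≤ 2 * (b - a) / (3 * m ^ 2) * (τ0 ^ 2 + τ1 ^ 2) := by
          rw [intervalIntegral.integral_div]
          have : 2 * (b - a) / (3 * m ^ 2) * (τ0 ^ 2 + τ1 ^ 2)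
              = (2 * (b - a) / 3 * (τ0 ^ 2 + τ1 ^ 2)) / m ^ 2 := by ring
          rw [this]
          exact div_le_div_of_nonneg_right' hIhigh (by positivity)
end

section
/- Let a < b, r, r' > 0, and let u : ℝ → ℝ be continuous with u affine of slope s₋ on [a−r, a], affine of slope s on [a, b], and affine of slope s₊ on [b, b+r']. Let δ_a, δ_b ∈ ℝ be such that ã := a + δ_a ∈ (a−r, b), b̃ := b + δ_b ∈ (a, b+r'), and ã < b̃. Set s̃ = (u(b̃) − u(ã))/(b̃ − ã) and I = ∫_{(a,b) ∩ (ã,b̃)} (s̃ − s)² dx. Then: (i) if δ_a ≥ 0 and δ_b ≤ 0, then I = 0; (ii) if δ_a ≤ 0 and δ_b ≤ 0, then I = ((b̃ − a)/(b̃ − ã)²) δ_a² (s₋ − s)²; (iii) if δ_a ≥ 0 and δ_b ≥ 0, then I = ((b − ã)/(b̃ − ã)²) δ_b² (s − s₊)²; (iv) if δ_a ≤ 0 and δ_b ≥ 0, then I = ((b − a)/(b̃ − ã)²) ξ², where ξ = δ_a (s₋ − s) + δ_b (s − s₊). -/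
open MeasureTheory

/-- Secant slope of `u` between `A` and `B`. -/
noncomputable def sec (u : ℝ → ℝ) (A B : ℝ) : ℝ := (u B - u A) / (B - A)


lemma integral_const_Ioo (x y c : ℝ) (h : x ≤ y) :
    (∫ _ in Set.Ioo x y, c) = (y - x) * c := by
  rw [MeasureTheory.setIntegral_const, measureReal_def, Real.volume_Ioo,
    ENNReal.toReal_ofReal (by linarith), smul_eq_mul]

/-- Case-by-case value of
`I = ∫_{(a,b) ∩ (ã,b̃)} (s̃ − s)² dx`, where `u` is continuous piecewise affine with slopes
`s₋, s, s₊` on `[a−r,a]`, `[a,b]`, `[b,b+r']`, `ã = a + δ_a`, `b̃ = b + δ_b`, and `s̃` is the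
secant slope of `u` between `ã` and `b̃`. -/
theorem stmt9 (a b r r' δa δb sm s sp : ℝ) (u : ℝ → ℝ)
    (hr : 0 < r) (hr' : 0 < r') (hab : a < b) (hu : Continuous u)
    (haffm : ∀ t ∈ Set.Icc (a - r) a, u t = u a + sm * (t - a))
    (haff : ∀ t ∈ Set.Icc a b, u t = u a + s * (t - a))
    (haffp : ∀ t ∈ Set.Icc b (b + r'), u t = u b + sp * (t - b))
    (hta1 : a - r < a + δa) (hta2 : a + δa < b)
    (htb1 : a < b + δb) (htb2 : b + δb < b + r')
    (hlt : a + δa < b + δb) :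
    (0 ≤ δa → δb ≤ 0 →
      (∫ t in Set.Ioo a b ∩ Set.Ioo (a + δa) (b + δb),
        (sec u (a + δa) (b + δb) - s) ^ 2) = 0) ∧
    (δa ≤ 0 → δb ≤ 0 →
      (∫ t in Set.Ioo a b ∩ Set.Ioo (a + δa) (b + δb),
        (sec u (a + δa) (b + δb) - s) ^ 2) =
      (b + δb - a) / (b + δb - (a + δa)) ^ 2 * δa ^ 2 * (sm - s) ^ 2) ∧
    (0 ≤ δa → 0 ≤ δb →
      (∫ t in Set.Ioo a b ∩ Set.Ioo (a + δa) (b + δb),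
        (sec u (a + δa) (b + δb) - s) ^ 2) =
      (b - (a + δa)) / (b + δb - (a + δa)) ^ 2 * δb ^ 2 * (s - sp) ^ 2) ∧
    (δa ≤ 0 → 0 ≤ δb →
      (∫ t in Set.Ioo a b ∩ Set.Ioo (a + δa) (b + δb),
        (sec u (a + δa) (b + δb) - s) ^ 2) =
      (b - a) / (b + δb - (a + δa)) ^ 2 * (δa * (sm - s) + δb * (s - sp)) ^ 2) := by

  have hne : b + δb - (a + δa) ≠ 0 := by intro h; linarith [hlt]
  refine ⟨?_, ?_, ?_, ?_⟩
  · intro ha hb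
    have hsec : sec u (a + δa) (b + δb) = s := by
      unfold sec
      rw [haff (a + δa) ⟨by linarith, by linarith⟩,
          haff (b + δb) ⟨by linarith, by linarith⟩]
      field_simp
      ring
    simp [hsec]
  · intro ha hb
    have hsec : sec u (a + δa) (b + δb) = s + δa * (s - sm) / (b + δb - (a + δa)) := by
      unfold sec
      rw [haffm (a + δa) ⟨by linarith, by linarith⟩,
          haff (b + δb) ⟨by linarith, by linarith⟩]
      field_simp
      ring
    rw [Set.Ioo_inter_Ioo, max_eq_left (by linarith), min_eq_right (by linarith),
      integral_const_Ioo _ _ _ (by linarith), hsec]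
    field_simp
    ring
  · intro ha hb
    have hsec : sec u (a + δa) (b + δb) = s + δb * (sp - s) / (b + δb - (a + δa)) := by
      unfold sec
      rw [haff (a + δa) ⟨by linarith, by linarith⟩,
          haffp (b + δb) ⟨by linarith, by linarith⟩,
          haff b ⟨by linarith, le_refl b⟩]
      field_simp
      ring
    rw [Set.Ioo_inter_Ioo, max_eq_right (by linarith), min_eq_left (by linarith),
      integral_const_Ioo _ _ _ (by linarith), hsec]
    field_simp
    ring
  · intro ha hb
    have hsec : sec u (a + δa) (b + δb) =
        s + (δb * (sp - s) - δa * (sm - s)) / (b + δb - (a + δa)) := by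
      unfold sec
      rw [haffm (a + δa) ⟨by linarith, by linarith⟩,
          haffp (b + δb) ⟨by linarith, by linarith⟩,
          haff b ⟨by linarith, le_refl b⟩]
      field_simp
      ring
    rw [Set.Ioo_inter_Ioo, max_eq_left (by linarith), min_eq_left (by linarith),
      integral_const_Ioo _ _ _ (by linarith), hsec]
    field_simp
    ring_nf
end

section
/- Let a < b, r, r' > 0, and let u : ℝ → ℝ be continuous with u affine of slope s₋ on [a−r, a], affine of slope s on [a, b], and affine of slope s₊ on [b, b+r']. Let δ_a, δ_b ∈ ℝ be such that ã := a + δ_a ∈ (a−r, b), b̃ := b + δ_b ∈ (a, b+r'), and ã < b̃. Set s̃ = (u(b̃) − u(ã))/(b̃ − ã), ξ = δ_a (s₋ − s) + δ_b (s − s₊), I₋ = ∫_{(a−r,a) ∩ (ã,b̃)} (s̃ − s₋)² dx, and I₊ = ∫_{(b,b+r') ∩ (ã,b̃)} (s̃ − s₊)² dx. Then: (i) if δ_a ≥ 0 then I₋ = 0, and if δ_b ≤ 0 then I₊ = 0; (ii) if δ_a ≤ 0 and δ_b ≤ 0, then I₋ = −δ_a (δ_a/(b̃ − ã) + 1)²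 (s₋ − s)²; (iii) if δ_a ≥ 0 and δ_b ≥ 0, then I₊ = δ_b (δ_b/(b̃ − ã) − 1)² (s − s₊)²; (iv) if δ_a ≤ 0 and δ_b ≥ 0, then I₋ = −δ_a (ξ/(b̃ − ã) + (s₋ − s))² and I₊ = δ_b (ξ/(b̃ − ã) − (s − s₊))². -/
open MeasureTheory

lemma ioo_const_int (x y c : ℝ) (h : x ≤ y) : (∫ _t in Set.Ioo x y, c) = (y - x) * c := by
  rw [MeasureTheory.setIntegral_const, measureReal_def, Real.volume_Ioo, ENNReal.toReal_ofReal (by linarith),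
    smul_eq_mul]

/-- Case-by-case values of the neighbor contributions
`I₋ = ∫_{(a−r,a) ∩ (ã,b̃)} (s̃ − s₋)² dx` and `I₊ = ∫_{(b,b+r') ∩ (ã,b̃)} (s̃ − s₊)² dx`,
where `u` is continuous piecewise affine with slopes `s₋, s, s₊` on `[a−r,a]`, `[a,b]`,
`[b,b+r']`, `ã = a + δ_a`, `b̃ = b + δ_b`, `s̃` is the secant slope of `u` between `ã` and
`b̃`, and `ξ = δ_a(s₋ − s) + δ_b(s − s₊)`. -/
theorem stmt10 (a b r r' δa δb sm s sp : ℝ) (u : ℝ → ℝ)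
    (hr : 0 < r) (hr' : 0 < r') (hab : a < b) (hu : Continuous u)
    (haffm : ∀ t ∈ Set.Icc (a - r) a, u t = u a + sm * (t - a))
    (haff : ∀ t ∈ Set.Icc a b, u t = u a + s * (t - a))
    (haffp : ∀ t ∈ Set.Icc b (b + r'), u t = u b + sp * (t - b))
    (hta1 : a - r < a + δa) (hta2 : a + δa < b)
    (htb1 : a < b + δb) (htb2 : b + δb < b + r')
    (hlt : a + δa < b + δb) :
    (0 ≤ δa →
      (∫ t in Set.Ioo (a - r) a ∩ Set.Ioo (a + δa) (b + δb),
        (sec u (a + δa) (b + δb) - sm) ^ 2) = 0) ∧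
    (δb ≤ 0 →
      (∫ t in Set.Ioo b (b + r') ∩ Set.Ioo (a + δa) (b + δb),
        (sec u (a + δa) (b + δb) - sp) ^ 2) = 0) ∧
    (δa ≤ 0 → δb ≤ 0 →
      (∫ t in Set.Ioo (a - r) a ∩ Set.Ioo (a + δa) (b + δb),
        (sec u (a + δa) (b + δb) - sm) ^ 2) =
      -δa * (δa / (b + δb - (a + δa)) + 1) ^ 2 * (sm - s) ^ 2) ∧
    (0 ≤ δa → 0 ≤ δb →
      (∫ t in Set.Ioo b (b + r') ∩ Set.Ioo (a + δa) (b + δb),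
        (sec u (a + δa) (b + δb) - sp) ^ 2) =
      δb * (δb / (b + δb - (a + δa)) - 1) ^ 2 * (s - sp) ^ 2) ∧
    (δa ≤ 0 → 0 ≤ δb →
      (∫ t in Set.Ioo (a - r) a ∩ Set.Ioo (a + δa) (b + δb),
        (sec u (a + δa) (b + δb) - sm) ^ 2) =
      -δa * ((δa * (sm - s) + δb * (s - sp)) / (b + δb - (a + δa)) + (sm - s)) ^ 2 ∧
      (∫ t in Set.Ioo b (b + r') ∩ Set.Ioo (a + δa) (b + δb),
        (sec u (a + δa) (b + δb) - sp) ^ 2) =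
      δb * ((δa * (sm - s) + δb * (s - sp)) / (b + δb - (a + δa)) - (s - sp)) ^ 2) := by
  have hL : (0:ℝ) < b + δb - (a + δa) := by linarith
  have hLne : b + δb - (a + δa) ≠ 0 := ne_of_gt hL
  have hsec : sec u (a + δa) (b + δb) = (u (b + δb) - u (a + δa)) / (b + δb - (a + δa)) := rfl
  -- left intersection when δa ≤ 0
  have hleft : Set.Ioo (a - r) a ∩ Set.Ioo (a + δa) (b + δb) = Set.Ioo (a + δa) a := by
    rw [Set.Ioo_inter_Ioo, max_eq_right (by linarith : a - r ≤ a + δa),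
      min_eq_left (by linarith : a ≤ b + δb)]
  have hright : Set.Ioo b (b + r') ∩ Set.Ioo (a + δa) (b + δb) = Set.Ioo b (b + δb) := by
    rw [Set.Ioo_inter_Ioo, max_eq_left (by linarith : a + δa ≤ b),
      min_eq_right (by linarith : b + δb ≤ b + r')]
  have huam : δa ≤ 0 → u (a + δa) = u a + sm * (a + δa - a) := fun h =>
    haffm (a + δa) ⟨le_of_lt hta1, by linarith⟩
  have huap : 0 ≤ δa → u (a + δa) = u a + s * (a + δa - a) := fun h =>
    haff (a + δa) ⟨by linarith, le_of_lt hta2⟩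
  have hubm : δb ≤ 0 → u (b + δb) = u a + s * (b + δb - a) := fun h =>
    haff (b + δb) ⟨le_of_lt htb1, by linarith⟩
  have hub : u b = u a + s * (b - a) := haff b ⟨le_of_lt hab, le_refl b⟩
  have hubp : 0 ≤ δb → u (b + δb) = u a + s * (b - a) + sp * (b + δb - b) := fun h => by
    rw [haffp (b + δb) ⟨by linarith, le_of_lt htb2⟩, hub]
  refine ⟨?_, ?_, ?_, ?_, fun ha hb => ⟨?_, ?_⟩⟩
  · intro ha
    have : Set.Ioo (a + δa) a = (∅ : Set ℝ) := Set.Ioo_eq_empty (by linarith)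
    rw [hleft, this, Measure.restrict_empty, integral_zero_measure]
  · intro hb
    have : Set.Ioo b (b + δb) = (∅ : Set ℝ) := Set.Ioo_eq_empty (by linarith)
    rw [hright, this, Measure.restrict_empty, integral_zero_measure]
  · intro ha hb
    rw [hleft, ioo_const_int _ _ _ (by linarith), hsec, huam ha, hubm hb]
    field_simp
    ring
  · intro ha hb
    rw [hright, ioo_const_int _ _ _ (by linarith), hsec, huap ha, hubp hb]
    field_simp
    ring
  · rw [hleft, ioo_const_int _ _ _ (by linarith), hsec, huam ha, hubp hb]
    field_simp
    ring_nf
  · rw [hright, ioo_const_int _ _ _ (by linarith), hsec, huam ha, hubp hb]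
    field_simp
    ring_nf
end

section
/- Let a < b, r, r' > 0, and let u : ℝ → ℝ be continuous with u affine of slope s₋ on [a−r, a], affine of slope s on [a, b], and affine of slope s₊ on [b, b+r']. Let δ_a, δ_b ∈ ℝ be such that ã := a + δ_a ∈ (a−r, b), b̃ := b + δ_b ∈ (a, b+r'), and ã < b̃. Set s̃ = (u(b̃) − u(ã))/(b̃ − ã), ξ = δ_a (s₋ − s) + δ_b (s − s₊), and S = ∫_{(a,b) ∩ (ã,b̃)} (s̃ − s)² dx + ∫_{(a−r,a) ∩ (ã,b̃)} (s̃ − s₋)² dx + ∫_{(b,b+r') ∩ (ã,b̃)} (s̃ − s₊)² dx. Then: (i) if δ_a ≥ 0 and δ_b ≥ 0, S = δ_b (s − s₊)² − (δ_b²/(b̃ − ã)) (s − s₊)²; (ii) if δ_a ≤ 0 and δ_b ≤ 0, S = −δ_a (s₋ − s)² − (δ_a²/(b̃ − ã)) (s₋ − s)²; (iii) if δ_a ≤ 0 and δ_b ≥ 0, S = δ_b (s − s₊)² − δ_a (s₋ − s)² − ξ²/(b̃ − ã); (iv) if δ_a ≥ 0 and δ_b ≤ 0, S = 0. -/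
open MeasureTheory

/-- Total squared L² norm over the perturbed element `(ã, b̃)` of the difference between
the derivative of `u` (with slopes `s₋, s, s₊` on the three elements) and the constant
secant slope `s̃`. -/
noncomputable def Stot (a b r r' δa δb sm s sp : ℝ) (u : ℝ → ℝ) : ℝ :=
  (∫ t in Set.Ioo a b ∩ Set.Ioo (a + δa) (b + δb),
    (sec u (a + δa) (b + δb) - s) ^ 2) +
  (∫ t in Set.Ioo (a - r) a ∩ Set.Ioo (a + δa) (b + δb),
    (sec u (a + δa) (b + δb) - sm) ^ 2) +
  (∫ t in Set.Ioo b (b + r') ∩ Set.Ioo (a + δa) (b + δb),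
    (sec u (a + δa) (b + δb) - sp) ^ 2)

lemma int_const_inter (c x y p q : ℝ) :
    (∫ _ in Set.Ioo x y ∩ Set.Ioo p q, c) = max (min y q - max x p) 0 * c := by
  rw [Set.Ioo_inter_Ioo, MeasureTheory.setIntegral_const, measureReal_def, Real.volume_Ioo,
    ENNReal.toReal_ofReal', smul_eq_mul]

/-- Case-by-case value of the total contribution `S`, with
`ξ = δ_a(s₋ − s) + δ_b(s − s₊)`. -/
theorem stmt11 (a b r r' δa δb sm s sp : ℝ) (u : ℝ → ℝ)
    (hr : 0 < r) (hr' : 0 < r') (hab : a < b) (hu : Continuous u)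
    (haffm : ∀ t ∈ Set.Icc (a - r) a, u t = u a + sm * (t - a))
    (haff : ∀ t ∈ Set.Icc a b, u t = u a + s * (t - a))
    (haffp : ∀ t ∈ Set.Icc b (b + r'), u t = u b + sp * (t - b))
    (hta1 : a - r < a + δa) (hta2 : a + δa < b)
    (htb1 : a < b + δb) (htb2 : b + δb < b + r')
    (hlt : a + δa < b + δb) :
    (0 ≤ δa → 0 ≤ δb →
      Stot a b r r' δa δb sm s sp u =
        δb * (s - sp) ^ 2 - δb ^ 2 / (b + δb - (a + δa)) * (s - sp) ^ 2) ∧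
    (δa ≤ 0 → δb ≤ 0 →
      Stot a b r r' δa δb sm s sp u =
        -δa * (sm - s) ^ 2 - δa ^ 2 / (b + δb - (a + δa)) * (sm - s) ^ 2) ∧
    (δa ≤ 0 → 0 ≤ δb →
      Stot a b r r' δa δb sm s sp u =
        δb * (s - sp) ^ 2 - δa * (sm - s) ^ 2 -
          (δa * (sm - s) + δb * (s - sp)) ^ 2 / (b + δb - (a + δa))) ∧
    (0 ≤ δa → δb ≤ 0 → Stot a b r r' δa δb sm s sp u = 0) := by
  have hpos : 0 < b + δb - (a + δa) := by linarith
  have hne : b + δb - (a + δa) ≠ 0 := ne_of_gt hpos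
  rw [Stot, int_const_inter, int_const_inter, int_const_inter]
  refine ⟨?_, ?_, ?_, ?_⟩
  · -- δa ≥ 0, δb ≥ 0
    intro h1 h2
    have hua : u (a + δa) = u a + s * δa := by
      rw [haff (a + δa) ⟨by linarith, le_of_lt hta2⟩]; ring
    have hub : u (b + δb) = u a + s * (b - a) + sp * δb := by
      rw [haffp (b + δb) ⟨by linarith, le_of_lt htb2⟩,
        haff b ⟨le_of_lt hab, le_refl b⟩]; ring
    have hsec : sec u (a + δa) (b + δb) =
        (s * (b - a) + sp * δb - s * δa) / (b + δb - (a + δa)) := by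
      rw [sec, hua, hub]; congr 1; ring
    rw [show min b (b + δb) = b from min_eq_left (by linarith),
      show max a (a + δa) = a + δa from max_eq_right (by linarith),
      show max (b - (a + δa)) 0 = b - (a + δa) from max_eq_left (by linarith),
      show min a (b + δb) = a from min_eq_left (by linarith),
      show max (a - r) (a + δa) = a + δa from max_eq_right (by linarith),
      show max (a - (a + δa)) 0 = 0 from max_eq_right (by linarith),
      show min (b + r') (b + δb) = b + δb from min_eq_right (by linarith),
      show max b (a + δa) = b from max_eq_left (by linarith),
      show max (b + δb - b) 0 = b + δb - b from max_eq_left (by linarith),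
      hsec]
    field_simp
    ring
  · -- δa ≤ 0, δb ≤ 0
    intro h1 h2
    have hua : u (a + δa) = u a + sm * δa := by
      rw [haffm (a + δa) ⟨le_of_lt hta1, by linarith⟩]; ring
    have hub : u (b + δb) = u a + s * (b + δb - a) := by
      rw [haff (b + δb) ⟨le_of_lt htb1, by linarith⟩]
    have hsec : sec u (a + δa) (b + δb) =
        (s * (b + δb - a) - sm * δa) / (b + δb - (a + δa)) := by
      rw [sec, hua, hub]; congr 1; ring
    rw [show min b (b + δb) = b + δb from min_eq_right (by linarith),
      show max a (a + δa) = a from max_eq_left (by linarith),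
      show max (b + δb - a) 0 = b + δb - a from max_eq_left (by linarith),
      show min a (b + δb) = a from min_eq_left (by linarith),
      show max (a - r) (a + δa) = a + δa from max_eq_right (by linarith),
      show max (a - (a + δa)) 0 = a - (a + δa) from max_eq_left (by linarith),
      show min (b + r') (b + δb) = b + δb from min_eq_right (by linarith),
      show max b (a + δa) = b from max_eq_left (by linarith),
      show max (b + δb - b) 0 = 0 from max_eq_right (by linarith),
      hsec]
    field_simp
    ring
  · -- δa ≤ 0, δb ≥ 0
    intro h1 h2
    have hua : u (a + δa) = u a + sm * δa := by
      rw [haffm (a + δa) ⟨le_of_lt hta1, by linarith⟩]; ring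
    have hub : u (b + δb) = u a + s * (b - a) + sp * δb := by
      rw [haffp (b + δb) ⟨by linarith, le_of_lt htb2⟩,
        haff b ⟨le_of_lt hab, le_refl b⟩]; ring
    have hsec : sec u (a + δa) (b + δb) =
        (s * (b - a) + sp * δb - sm * δa) / (b + δb - (a + δa)) := by
      rw [sec, hua, hub]; congr 1; ring
    rw [show min b (b + δb) = b from min_eq_left (by linarith),
      show max a (a + δa) = a from max_eq_left (by linarith),
      show max (b - a) 0 = b - a from max_eq_left (by linarith),
      show min a (b + δb) = a from min_eq_left (by linarith),
      show max (a - r) (a + δa) = a + δa from max_eq_right (by linarith),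
      show max (a - (a + δa)) 0 = a - (a + δa) from max_eq_left (by linarith),
      show min (b + r') (b + δb) = b + δb from min_eq_right (by linarith),
      show max b (a + δa) = b from max_eq_left (by linarith),
      show max (b + δb - b) 0 = b + δb - b from max_eq_left (by linarith),
      hsec]
    field_simp
    ring
  · -- δa ≥ 0, δb ≤ 0
    intro h1 h2
    have hua : u (a + δa) = u a + s * δa := by
      rw [haff (a + δa) ⟨by linarith, le_of_lt hta2⟩]; ring
    have hub : u (b + δb) = u a + s * (b + δb - a) := by
      rw [haff (b + δb) ⟨le_of_lt htb1, by linarith⟩]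
    have hsec : sec u (a + δa) (b + δb) = s := by
      rw [sec, hua, hub]
      rw [show u a + s * (b + δb - a) - (u a + s * δa)
          = s * (b + δb - (a + δa)) by ring]
      field_simp
    rw [show min a (b + δb) = a from min_eq_left (by linarith),
      show max (a - r) (a + δa) = a + δa from max_eq_right (by linarith),
      show max (a - (a + δa)) 0 = 0 from max_eq_right (by linarith),
      show max b (a + δa) = b from max_eq_left (by linarith),
      show min (b + r') (b + δb) = b + δb from min_eq_right (by linarith),
      show max (b + δb - b) 0 = 0 from max_eq_right (by linarith),
      hsec]
    ring
end
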